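/- For coupled explicit Euler dynamical networks sharing local dynamics f (L_f-Lipschitz) and coupling g (L_g-Lipschitz in each argument, bounded by G), with weight matrices C and Ĉ and identical initial conditions, the stacked trajectory error e_n := max_i ‖x̂_i(t_n) − x_i(t_n)‖ satisfies e_{n+1} ≤ (1 + δt(L_f + 2 L_g ‖Ĉ‖_∞))·e_n + δt·G·‖Ĉ − C‖_∞, where ‖A‖_∞ := max_i Σ_j |a_{ij}|; hence e_n ≤ (G·‖Ĉ−C‖_∞ / (L_f + 2L_g‖Ĉ‖_∞)) · ((1 + δt(L_f + 2L_g‖Ĉ‖_∞))^n − 1). -/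

import Mathlib

open Finset

/-- The max-row-sum matrix norm `‖A‖_∞ = max_i Σ_j |a_{ij}|`. -/
noncomputable def normInf {N : ℕ} [NeZero N] (A : Fin N → Fin N → ℝ) : ℝ :=
  Finset.univ.sup' Finset.univ_nonempty (fun i => ∑ j, |A i j|)

lemma normInf_nonneg {N : ℕ} [NeZero N] (A : Fin N → Fin N → ℝ) : 0 ≤ normInf A := by
  obtain ⟨i, hi⟩ := (Finset.univ_nonempty : (Finset.univ : Finset (Fin N)).Nonempty)
  exact le_trans (Finset.sum_nonneg fun j _ => abs_nonneg _)
    (Finset.le_sup' (fun i => ∑ j, |A i j|) hi)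

lemma row_le_normInf {N : ℕ} [NeZero N] (A : Fin N → Fin N → ℝ) (i : Fin N) :
    ∑ j, |A i j| ≤ normInf A :=
  Finset.le_sup' (fun i => ∑ j, |A i j|) (Finset.mem_univ i)

/-- Trajectory error between two Euler dynamical networks with the same local and
coupling dynamics but different weight matrices: one-step recursion bound and
resulting closed-form bound. -/
theorem network_weight_error_propagation {N D : ℕ} [NeZero N]
    (δt Lf Lg G : ℝ) (hδt : 0 < δt) (hLf : 0 < Lf) (hLg : 0 ≤ Lg) (hG : 0 ≤ G)
    (f : EuclideanSpace ℝ (Fin D) → EuclideanSpace ℝ (Fin D))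
    (g : EuclideanSpace ℝ (Fin D) → EuclideanSpace ℝ (Fin D) → EuclideanSpace ℝ (Fin D))
    (hf : ∀ a b, ‖f a - f b‖ ≤ Lf * ‖a - b‖)
    (hg : ∀ a b a' b', ‖g a b - g a' b'‖ ≤ Lg * (‖a - a'‖ + ‖b - b'‖))
    (hgB : ∀ a b, ‖g a b‖ ≤ G)
    (C Chat : Fin N → Fin N → ℝ)
    (x xh : ℕ → Fin N → EuclideanSpace ℝ (Fin D))
    (hx : ∀ n i, x (n + 1) i = x n i + δt • (f (x n i) +
      ∑ j ∈ Finset.univ.erase i, C i j • g (x n i) (x n j)))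
    (hxh : ∀ n i, xh (n + 1) i = xh n i + δt • (f (xh n i) +
      ∑ j ∈ Finset.univ.erase i, Chat i j • g (xh n i) (xh n j)))
    (h0 : ∀ i, x 0 i = xh 0 i) :
    (∀ n, (Finset.univ.sup' Finset.univ_nonempty fun i => ‖xh (n + 1) i - x (n + 1) i‖)
        ≤ (1 + δt * (Lf + 2 * Lg * normInf Chat))
            * (Finset.univ.sup' Finset.univ_nonempty fun i => ‖xh n i - x n i‖)
          + δt * G * normInf (fun i j => Chat i j - C i j))
    ∧ (∀ n, (Finset.univ.sup' Finset.univ_nonempty fun i => ‖xh n i - x n i‖)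
        ≤ (G * normInf (fun i j => Chat i j - C i j) / (Lf + 2 * Lg * normInf Chat))
            * ((1 + δt * (Lf + 2 * Lg * normInf Chat)) ^ n - 1)) := by
  set Dm := normInf (fun i j => Chat i j - C i j) with hDm
  set K := Lf + 2 * Lg * normInf Chat with hK
  have hChat0 : 0 ≤ normInf Chat := normInf_nonneg Chat
  have hDm0 : 0 ≤ Dm := normInf_nonneg _
  have hKpos : 0 < K := by positivity
  set e : ℕ → ℝ := fun n => Finset.univ.sup' Finset.univ_nonempty fun i => ‖xh n i - x n i‖
    with he
  have he0 : ∀ n, 0 ≤ e n := by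
    intro n
    obtain ⟨i, hi⟩ := (Finset.univ_nonempty : (Finset.univ : Finset (Fin N)).Nonempty)
    exact le_trans (norm_nonneg _) (Finset.le_sup' (fun i => ‖xh n i - x n i‖) hi)
  have step : ∀ n, e (n + 1) ≤ (1 + δt * K) * e n + δt * G * Dm := by
    intro n
    apply Finset.sup'_le
    intro i _
    have hei : ∀ j, ‖xh n j - x n j‖ ≤ e n := fun j =>
      Finset.le_sup' (fun i => ‖xh n i - x n i‖) (Finset.mem_univ j)
    have key : xh (n + 1) i - x (n + 1) i = (xh n i - x n i) +
        δt • ((f (xh n i) - f (x n i)) + ∑ j ∈ Finset.univ.erase i,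
          (Chat i j • (g (xh n i) (xh n j) - g (x n i) (x n j)) +
            (Chat i j - C i j) • g (x n i) (x n j))) := by
      rw [hx, hxh]
      simp only [smul_sub, sub_smul, smul_add, Finset.sum_add_distrib, Finset.sum_sub_distrib]
      abel
    have hsum : ‖∑ j ∈ Finset.univ.erase i,
        (Chat i j • (g (xh n i) (xh n j) - g (x n i) (x n j)) +
          (Chat i j - C i j) • g (x n i) (x n j))‖
        ≤ 2 * Lg * normInf Chat * e n + G * Dm := by
      calc ‖∑ j ∈ Finset.univ.erase i,
          (Chat i j • (g (xh n i) (xh n j) - g (x n i) (x n j)) +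
            (Chat i j - C i j) • g (x n i) (x n j))‖
          ≤ ∑ j ∈ Finset.univ.erase i,
            (|Chat i j| * (2 * Lg * e n) + |Chat i j - C i j| * G) := by
            refine (norm_sum_le _ _).trans (Finset.sum_le_sum fun j _ => ?_)
            refine (norm_add_le _ _).trans (add_le_add ?_ ?_)
            · rw [norm_smul, Real.norm_eq_abs]
              refine mul_le_mul_of_nonneg_left ?_ (abs_nonneg _)
              refine (hg _ _ _ _).trans ?_
              have := add_le_add (hei i) (hei j)
              nlinarith [hei i, hei j]
            · rw [norm_smul, Real.norm_eq_abs]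
              exact mul_le_mul_of_nonneg_left (hgB _ _) (abs_nonneg _)
        _ ≤ ∑ j, (|Chat i j| * (2 * Lg * e n) + |Chat i j - C i j| * G) := by
            refine Finset.sum_le_sum_of_subset_of_nonneg (Finset.erase_subset _ _)
              fun j _ _ => ?_
            have := he0 n
            positivity
        _ = (∑ j, |Chat i j|) * (2 * Lg * e n) + (∑ j, |Chat i j - C i j|) * G := by
            rw [Finset.sum_add_distrib, Finset.sum_mul, Finset.sum_mul]
        _ ≤ normInf Chat * (2 * Lg * e n) + Dm * G := by
            refine add_le_add (mul_le_mul_of_nonneg_right (row_le_normInf Chat i) ?_)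
              (mul_le_mul_of_nonneg_right (row_le_normInf (fun i j => Chat i j - C i j) i) hG)
            have := he0 n; positivity
        _ = 2 * Lg * normInf Chat * e n + G * Dm := by ring
    calc ‖xh (n + 1) i - x (n + 1) i‖
        ≤ ‖xh n i - x n i‖ + δt * (‖f (xh n i) - f (x n i)‖ +
            ‖∑ j ∈ Finset.univ.erase i,
              (Chat i j • (g (xh n i) (xh n j) - g (x n i) (x n j)) +
                (Chat i j - C i j) • g (x n i) (x n j))‖) := by
          rw [key]
          refine (norm_add_le _ _).trans (add_le_add_right ?_ _)
          rw [norm_smul, Real.norm_eq_abs, abs_of_pos hδt]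
          exact mul_le_mul_of_nonneg_left (norm_add_le _ _) hδt.le
      _ ≤ e n + δt * ((Lf * e n) + (2 * Lg * normInf Chat * e n + G * Dm)) := by
          refine add_le_add (hei i) (mul_le_mul_of_nonneg_left
            (add_le_add ((hf _ _).trans ?_) hsum) hδt.le)
          exact mul_le_mul_of_nonneg_left (hei i) hLf.le
      _ = (1 + δt * K) * e n + δt * G * Dm := by rw [hK]; ring
  refine ⟨step, ?_⟩
  intro n
  induction n with
  | zero =>
    simp only [pow_zero, sub_self, mul_zero]
    apply Finset.sup'_le
    intro i _
    rw [h0 i, sub_self, norm_zero]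
  | succ n ih =>
    have hA : (0:ℝ) ≤ 1 + δt * K := by positivity
    calc e (n + 1) ≤ (1 + δt * K) * e n + δt * G * Dm := step n
      _ ≤ (1 + δt * K) * ((G * Dm / K) * ((1 + δt * K) ^ n - 1)) + δt * G * Dm :=
          add_le_add_left (mul_le_mul_of_nonneg_left ih hA) _
      _ = (G * Dm / K) * ((1 + δt * K) ^ (n + 1) - 1) := by
          field_simp
          ring
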